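/- Let s > 0 and t̄ > 0. There exists a constant c > 0, depending only on s and t̄, such that for all real numbers ϱ > 0 and 0 < δ ≤ e^{−t̄} ϱ, there exists k ∈ ℕ with min( 2^{−ks} ϱ, e^{t̄ · 2^{2k}} δ ) ≥ c · ϱ · (ln(ϱ/δ))^{−s/2}; in particular sup_{k∈ℕ} min( 2^{−ks} ϱ, e^{t̄ · 2^{2k}} δ ) ≥ c · ϱ · (ln(ϱ/δ))^{−s/2}. -/
import Mathlib


/-- Balancing step in the proof of Theorem 5.2 (optimality for the backwards heat equation):
for `s, t̄ > 0` there is `c > 0` (depending only on `s` and `t̄`) such that for all `ϱ > 0` and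
`0 < δ ≤ e^{−t̄} ϱ` some `k ∈ ℕ` satisfies
`min(2^{−ks} ϱ, e^{t̄ 2^{2k}} δ) ≥ c ϱ (ln(ϱ/δ))^{−s/2}`; in particular the supremum over `k`
satisfies the same lower bound. -/
theorem stmt_16 (s tbar : ℝ) (hs : 0 < s) (htbar : 0 < tbar) :
    ∃ c : ℝ, 0 < c ∧ ∀ ϱ δ : ℝ, 0 < ϱ → 0 < δ → δ ≤ Real.exp (-tbar) * ϱ →
      (∃ k : ℕ, c * ϱ * Real.log (ϱ / δ) ^ (-(s / 2)) ≤
        min ((2 : ℝ) ^ (-(k : ℝ) * s) * ϱ) (Real.exp (tbar * 2 ^ (2 * k)) * δ)) ∧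
      c * ϱ * Real.log (ϱ / δ) ^ (-(s / 2)) ≤
        ⨆ k : ℕ, min ((2 : ℝ) ^ (-(k : ℝ) * s) * ϱ) (Real.exp (tbar * 2 ^ (2 * k)) * δ) := by
  refine ⟨(tbar / 4) ^ (s / 2), Real.rpow_pos_of_pos (by linarith) _, ?_⟩
  intro ϱ δ hϱ hδ hδϱ
  set c : ℝ := (tbar / 4) ^ (s / 2) with hc
  set L : ℝ := Real.log (ϱ / δ) with hLdef
  have hϱδ : Real.exp tbar ≤ ϱ / δ := by
    rw [le_div_iff₀ hδ]
    calc Real.exp tbar * δ ≤ Real.exp tbar * (Real.exp (-tbar) * ϱ) := by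
          exact mul_le_mul_of_nonneg_left hδϱ (Real.exp_pos _).le
      _ = ϱ := by rw [← mul_assoc, ← Real.exp_add]; simp
  have hL : tbar ≤ L := by
    have := Real.log_le_log (Real.exp_pos tbar) hϱδ
    simpa using this
  have hLpos : 0 < L := lt_of_lt_of_le htbar hL
  have hδeq : δ = ϱ * Real.exp (-L) := by
    rw [hLdef, Real.exp_neg, Real.exp_log (div_pos hϱ hδ)]
    field_simp
  have hlog2 : (0:ℝ) < Real.log 2 := Real.log_pos one_lt_two
  have hex : ∃ k : ℕ, L ≤ tbar * 2 ^ (2 * k) + (k : ℝ) * s * Real.log 2 := by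
    obtain ⟨n, hn⟩ := pow_unbounded_of_one_lt (L / tbar) (one_lt_two (α := ℝ))
    refine ⟨n, ?_⟩
    have h1 : (2:ℝ) ^ n ≤ 2 ^ (2 * n) := pow_le_pow_right₀ one_le_two (by omega)
    have h2 : L / tbar < 2 ^ (2 * n) := lt_of_lt_of_le hn h1
    have h3 : L < tbar * 2 ^ (2 * n) := by
      rw [div_lt_iff₀ htbar] at h2; linarith
    have h4 : (0:ℝ) ≤ (n : ℝ) * s * Real.log 2 :=
      mul_nonneg (mul_nonneg (Nat.cast_nonneg n) hs.le) hlog2.le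
    linarith
  set k : ℕ := Nat.find hex with hk
  have hkspec : L ≤ tbar * 2 ^ (2 * k) + (k : ℝ) * s * Real.log 2 := Nat.find_spec hex
  -- bound 2^(2k) ≤ 4 L / tbar
  have h2k : (2:ℝ) ^ (2 * k) ≤ 4 * L / tbar := by
    rcases Nat.eq_zero_or_pos k with hk0 | hkpos
    · rw [hk0]
      simp only [Nat.mul_zero, pow_zero]
      rw [le_div_iff₀ htbar]
      nlinarith
    · obtain ⟨m, hm⟩ := Nat.exists_eq_succ_of_ne_zero hkpos.ne'
      have hmin := Nat.find_min hex (by omega : m < k)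
      push_neg at hmin
      have hms : (0:ℝ) ≤ (m : ℝ) * s * Real.log 2 :=
        mul_nonneg (mul_nonneg (Nat.cast_nonneg m) hs.le) hlog2.le
      have h5 : tbar * 2 ^ (2 * m) < L := by linarith
      have h6 : (2:ℝ) ^ (2 * k) = 4 * 2 ^ (2 * m) := by
        rw [hm, show 2 * Nat.succ m = 2 * m + 2 by omega, pow_add]; ring
      rw [h6, le_div_iff₀ htbar]
      nlinarith
  -- key: c * L ^ (-(s/2)) ≤ 2 ^ (-(k:ℝ) * s)
  have hkey : c * L ^ (-(s / 2)) ≤ (2:ℝ) ^ (-(k : ℝ) * s) := by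
    have e1 : (2:ℝ) ^ (-(k : ℝ) * s) = ((2:ℝ) ^ (2 * k)) ^ (-(s / 2)) := by
      rw [← Real.rpow_natCast 2 (2 * k), ← Real.rpow_mul (by norm_num : (0:ℝ) ≤ 2)]
      push_cast
      ring_nf
    have hpos4 : (0:ℝ) < 4 * L / tbar := by positivity
    have e2 : ((2:ℝ) ^ (2 * k)) ^ (-(s / 2)) ≥ (4 * L / tbar) ^ (-(s / 2)) :=
      Real.rpow_le_rpow_of_nonpos (by positivity) h2k (by linarith)
    have e3 : (4 * L / tbar) ^ (-(s / 2)) = c * L ^ (-(s / 2)) := by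
      rw [hc, Real.rpow_neg hpos4.le, Real.rpow_neg hLpos.le]
      rw [show (4 * L / tbar : ℝ) = (tbar / 4 * L⁻¹)⁻¹ by field_simp]
      rw [Real.inv_rpow (by positivity), inv_inv,
        Real.mul_rpow (by positivity) (by positivity),
        Real.inv_rpow hLpos.le]
    rw [e1]
    calc c * L ^ (-(s / 2)) = (4 * L / tbar) ^ (-(s / 2)) := e3.symm
      _ ≤ ((2:ℝ) ^ (2 * k)) ^ (-(s / 2)) := e2
  -- the min bound
  have hmin : c * ϱ * L ^ (-(s / 2)) ≤
      min ((2:ℝ) ^ (-(k : ℝ) * s) * ϱ) (Real.exp (tbar * 2 ^ (2 * k)) * δ) := by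
    have h1 : c * ϱ * L ^ (-(s / 2)) ≤ (2:ℝ) ^ (-(k : ℝ) * s) * ϱ := by
      have := mul_le_mul_of_nonneg_right hkey hϱ.le
      calc c * ϱ * L ^ (-(s / 2)) = c * L ^ (-(s / 2)) * ϱ := by ring
        _ ≤ (2:ℝ) ^ (-(k : ℝ) * s) * ϱ := this
    have h2 : (2:ℝ) ^ (-(k : ℝ) * s) * ϱ ≤ Real.exp (tbar * 2 ^ (2 * k)) * δ := by
      rw [hδeq, show Real.exp (tbar * 2 ^ (2 * k)) * (ϱ * Real.exp (-L)) =
        Real.exp (tbar * 2 ^ (2 * k) - L) * ϱ by rw [Real.exp_sub, Real.exp_neg]; field_simp]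
      refine mul_le_mul_of_nonneg_right ?_ hϱ.le
      rw [Real.rpow_def_of_pos (by norm_num : (0:ℝ) < 2)]
      apply Real.exp_le_exp.mpr
      have : Real.log 2 * (-(k : ℝ) * s) = -((k : ℝ) * s * Real.log 2) := by ring
      rw [this]
      linarith
    exact le_min h1 (le_trans h1 h2)
  refine ⟨⟨k, hmin⟩, ?_⟩
  have hbdd : BddAbove (Set.range fun k : ℕ =>
      min ((2:ℝ) ^ (-(k : ℝ) * s) * ϱ) (Real.exp (tbar * 2 ^ (2 * k)) * δ)) := by
    refine ⟨ϱ, ?_⟩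
    rintro x ⟨j, rfl⟩
    refine le_trans (min_le_left _ _) ?_
    have : (2:ℝ) ^ (-(j : ℝ) * s) ≤ 1 :=
      Real.rpow_le_one_of_one_le_of_nonpos one_le_two
        (by nlinarith [Nat.cast_nonneg (α := ℝ) j])
    nlinarith
  exact le_trans hmin (le_ciSup hbdd k)
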